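/- Let k be a number field, S a finite set of places containing the archimedean places, and let f, g ∈ O_k[t] be polynomials with no common zero, and f̃, g̃ ∈ k[t] with f·g̃ + g·f̃ = h for some h ∈ O_k[t]. Then there exists a nonzero constant c ∈ k^* such that for every solution (t, u, v) ∈ O_{k,S} × O_{k,S}^* × O_{k,S}^* of f(t)u + g(t)v = h(t) with f(t)g(t) ≠ 0, we have c·(f̃(t) − v)/f(t) ∈ O_{k,S} and c·(u − g̃(t))/g(t) ∈ O_{k,S}. -/

import Mathlib

open Polynomial IsDedekindDomain NumberField

private theorem stmt5_denom {k : Type*} [Field k] [NumberField k] (p : k[X]) :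
    ∃ b : 𝓞 k, b ≠ 0 ∧ ∀ i, (algebraMap (𝓞 k) k b) * p.coeff i ∈ (algebraMap (𝓞 k) k).range := by
  obtain ⟨b, hb0, hb⟩ := IsLocalization.integerNormalization_spec (nonZeroDivisors (𝓞 k)) (S := k) p
  refine ⟨b, nonZeroDivisors.ne_zero hb0, fun i =>
    ⟨(IsLocalization.integerNormalization (nonZeroDivisors (𝓞 k)) p).coeff i, ?_⟩⟩
  rw [← coeff_map, hb, coeff_smul, Algebra.smul_def]

private theorem stmt5_evalmem {k : Type*} [Field k] [NumberField k]
    (S : Finset (HeightOneSpectrum (𝓞 k)))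
    (p : k[X]) (hp : ∀ i, p.coeff i ∈ (algebraMap (𝓞 k) k).range) (t : k)
    (ht : t ∈ (S : Set (HeightOneSpectrum (𝓞 k))).integer k) :
    p.eval t ∈ (S : Set (HeightOneSpectrum (𝓞 k))).integer k := by
  have hp' : p ∈ Polynomial.lifts (algebraMap (𝓞 k) k) := by
    rw [Polynomial.lifts_iff_coeff_lifts]
    intro n; obtain ⟨x, hx⟩ := hp n; exact ⟨x, hx⟩
  obtain ⟨q, hq⟩ := (Polynomial.mem_lifts _).mp hp'
  have h1 : p.eval t = aeval t q := by rw [← hq, aeval_def, eval_map]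
  rw [h1, ← Polynomial.aeval_subalgebra_coe q ((S : Set (HeightOneSpectrum (𝓞 k))).integer k)
    ⟨t, ht⟩]
  exact SetLike.coe_mem _

private theorem stmt5_unitmem {k : Type*} [Field k] [NumberField k]
    (S : Finset (HeightOneSpectrum (𝓞 k)))
    (u : kˣ) (hu : u ∈ (S : Set (HeightOneSpectrum (𝓞 k))).unit k) :
    (u : k) ∈ (S : Set (HeightOneSpectrum (𝓞 k))).integer k := by
  intro P hP
  exact (Set.unit_valuation_eq_one _ k ⟨u, hu⟩ hP).le

/-- For `f, g ∈ O_k[t]` with no common zero and `f̃, g̃ ∈ k[t]` with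
`f·g̃ + g·f̃ = h` for some `h ∈ O_k[t]`, there is a nonzero `c ∈ k^*` such that for every
solution `(t, u, v) ∈ O_{k,S} × O_{k,S}^* × O_{k,S}^*` of `f(t)u + g(t)v = h(t)` with
`f(t)g(t) ≠ 0`, both `c(f̃(t) − v)/f(t)` and `c(u − g̃(t))/g(t)` are `S`-integers. -/
theorem stmt_5 {k : Type*} [Field k] [NumberField k]
    (S : Finset (HeightOneSpectrum (𝓞 k)))
    (f g h ftil gtil : k[X])
    (hfint : ∀ i, f.coeff i ∈ (algebraMap (𝓞 k) k).range)
    (hgint : ∀ i, g.coeff i ∈ (algebraMap (𝓞 k) k).range)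
    (hhint : ∀ i, h.coeff i ∈ (algebraMap (𝓞 k) k).range)
    (hnocommon : ∀ z : AlgebraicClosure k, ¬(aeval z f = 0 ∧ aeval z g = 0))
    (hbezout : f * gtil + g * ftil = h) :
    ∃ c : k, c ≠ 0 ∧ ∀ t : k, ∀ u v : kˣ,
      t ∈ (S : Set (HeightOneSpectrum (𝓞 k))).integer k →
      u ∈ (S : Set (HeightOneSpectrum (𝓞 k))).unit k →
      v ∈ (S : Set (HeightOneSpectrum (𝓞 k))).unit k →
      f.eval t * u + g.eval t * v = h.eval t →
      f.eval t * g.eval t ≠ 0 →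
      c * (ftil.eval t - v) / f.eval t ∈ (S : Set (HeightOneSpectrum (𝓞 k))).integer k ∧
      c * ((u : k) - gtil.eval t) / g.eval t ∈ (S : Set (HeightOneSpectrum (𝓞 k))).integer k := by
  set T := (S : Set (HeightOneSpectrum (𝓞 k))).integer k with hT
  set φ := algebraMap (𝓞 k) k with hφ
  -- coprimality
  have hcop : IsCoprime f g := by
    refine (Polynomial.isCoprime_iff_aeval_ne_zero_of_isAlgClosed k (AlgebraicClosure k) f g).mpr
      fun a => ?_
    have := hnocommon a
    tauto
  obtain ⟨p0, q0, hpq⟩ := hcop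
  obtain ⟨bp, hbp0, hbp⟩ := stmt5_denom p0
  obtain ⟨bq, hbq0, hbq⟩ := stmt5_denom q0
  obtain ⟨b1, hb10, hb1⟩ := stmt5_denom ftil
  obtain ⟨b2, hb20, hb2⟩ := stmt5_denom gtil
  refine ⟨φ (bp * bq * b1 * b2), ?_, ?_⟩
  · intro h0
    have h1 := (map_eq_zero_iff φ (IsFractionRing.injective (𝓞 k) k)).mp h0
    exact mul_ne_zero (mul_ne_zero (mul_ne_zero hbp0 hbq0) hb10) hb20 h1
  intro t u v ht hu hv heq hfg
  have hF : f.eval t ≠ 0 := fun h0 => hfg (by rw [h0, zero_mul])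
  have hG : g.eval t ≠ 0 := fun h0 => hfg (by rw [h0, mul_zero])
  have hc : φ (bp * bq * b1 * b2) = φ bp * φ bq * φ b1 * φ b2 := by simp [map_mul]
  -- key identity from the Bezout relation and the equation
  have hheval : h.eval t = f.eval t * gtil.eval t + g.eval t * ftil.eval t := by
    rw [← hbezout]; simp
  have key : f.eval t * ((u : k) - gtil.eval t) = g.eval t * (ftil.eval t - (v : k)) := by
    rw [hheval] at heq; ring_nf; linear_combination heq
  -- evaluated coprimality
  have hbez_t : p0.eval t * f.eval t + q0.eval t * g.eval t = 1 := by
    have := congrArg (eval t) hpq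
    simpa using this
  -- the candidate S-integer value
  set E : k := φ bq * φ b2 * ((C (φ bp) * p0).eval t) * (((C (φ b1) * ftil).eval t) - φ b1 * v)
      + φ bp * φ b1 * ((C (φ bq) * q0).eval t) * (φ b2 * u - ((C (φ b2) * gtil).eval t)) with hE
  have hEmem : E ∈ T := by
    have hCp : ∀ i, (C (φ bp) * p0).coeff i ∈ φ.range := by
      intro i; rw [coeff_C_mul]; exact hbp i
    have hCq : ∀ i, (C (φ bq) * q0).coeff i ∈ φ.range := by
      intro i; rw [coeff_C_mul]; exact hbq i
    have hCf : ∀ i, (C (φ b1) * ftil).coeff i ∈ φ.range := by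
      intro i; rw [coeff_C_mul]; exact hb1 i
    have hCg : ∀ i, (C (φ b2) * gtil).coeff i ∈ φ.range := by
      intro i; rw [coeff_C_mul]; exact hb2 i
    have hum : (u : k) ∈ T := stmt5_unitmem S u hu
    have hvm : (v : k) ∈ T := stmt5_unitmem S v hv
    have halg : ∀ b : 𝓞 k, φ b ∈ T := fun b => T.algebraMap_mem b
    exact add_mem
      (mul_mem (mul_mem (mul_mem (halg bq) (halg b2)) (stmt5_evalmem S _ hCp t ht))
        (sub_mem (stmt5_evalmem S _ hCf t ht) (mul_mem (halg b1) hvm)))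
      (mul_mem (mul_mem (mul_mem (halg bp) (halg b1)) (stmt5_evalmem S _ hCq t ht))
        (sub_mem (mul_mem (halg b2) hum) (stmt5_evalmem S _ hCg t ht)))
  constructor
  · have : φ (bp * bq * b1 * b2) * (ftil.eval t - (v : k)) / f.eval t = E := by
      rw [div_eq_iff hF, hc, hE]
      simp only [eval_mul, eval_C]
      linear_combination (-(φ bp * φ bq * φ b1 * φ b2 * (ftil.eval t - (v : k)))) * hbez_t
        - (φ bp * φ bq * φ b1 * φ b2 * q0.eval t) * key
    rw [this]; exact hEmem
  · have : φ (bp * bq * b1 * b2) * ((u : k) - gtil.eval t) / g.eval t = E := by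
      rw [div_eq_iff hG, hc, hE]
      simp only [eval_mul, eval_C]
      linear_combination (-(φ bp * φ bq * φ b1 * φ b2 * ((u : k) - gtil.eval t))) * hbez_t
        + (φ bp * φ bq * φ b1 * φ b2 * p0.eval t) * key
    rw [this]; exact hEmem
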